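/- Let V, W be finite-dimensional vector spaces over ℝ of the same dimension n, and suppose given symmetric bilinear forms η, η' on V and symmetric bilinear forms θ, θ' on W, together with an isomorphism of pairs in the following weak sense: there exist endomorphisms u of V and v of W, with η'(x,y) = η(x, uy), θ'(x,y) = θ(x, vy), u self-adjoint for η, v self-adjoint for θ, and u, v have the same characteristic polynomial. If η and η' are positive definite and θ is nondegenerate, then θ and θ' have the same signature. -/

import Mathlib

open Module

/-- The positive index of inertia. -/
noncomputable def posIndex {V : Type*} [AddCommGroup V] [Module ℝ V]
    (B : V →ₗ[ℝ] V →ₗ[ℝ] ℝ) : ℕ :=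
  sSup {n : ℕ | ∃ W : Submodule ℝ V, Module.finrank ℝ W = n ∧ ∀ x ∈ W, x ≠ 0 → 0 < B x x}

/-- The negative index of inertia. -/
noncomputable def negIndex {V : Type*} [AddCommGroup V] [Module ℝ V]
    (B : V →ₗ[ℝ] V →ₗ[ℝ] ℝ) : ℕ :=
  sSup {n : ℕ | ∃ W : Submodule ℝ V, Module.finrank ℝ W = n ∧ ∀ x ∈ W, x ≠ 0 → B x x < 0}

/-- The signature `(s₊, s₋)` of a bilinear form. -/
noncomputable def signature {V : Type*} [AddCommGroup V] [Module ℝ V]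
    (B : V →ₗ[ℝ] V →ₗ[ℝ] ℝ) : ℕ × ℕ :=
  (posIndex B, negIndex B)

namespace Stmt19Aux

open Polynomial

lemma sqrt_mod_pow (μ : ℝ) (hμ : 0 < μ) (e : ℕ) : ∃ p : ℝ[X], (X - C μ)^(e+1) ∣ p^2 - X := by
  induction e with
  | zero =>
    refine ⟨C (Real.sqrt μ), ?_⟩
    have : (C (Real.sqrt μ))^2 - X = -((X : ℝ[X]) - C μ) := by
      rw [← C_pow, Real.sq_sqrt hμ.le]; ring
    rw [this, pow_one]
    exact dvd_neg.mpr dvd_rfl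
  | succ e ih =>
    obtain ⟨p, q, hq⟩ := ih
    have heval : eval μ p ^ 2 = μ := by
      have := congrArg (eval μ) hq
      simp at this
      linarith
    have hp0 : eval μ p ≠ 0 := by
      intro h; rw [h] at heval; simp at heval; linarith
    set c : ℝ := -eval μ q / (2 * eval μ p) with hc
    refine ⟨p + C c * (X - C μ)^(e+1), ?_⟩
    have expand : (p + C c * (X - C μ)^(e+1))^2 - X
        = (X - C μ)^(e+1) * (q + 2 * C c * p) + (C c)^2 * ((X - C μ)^(e+1))^2 := by
      linear_combination hq
    rw [expand]
    apply dvd_add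
    · rw [pow_succ]
      apply mul_dvd_mul_left
      rw [dvd_iff_isRoot]
      have : eval μ (q + 2 * C c * p) = eval μ q + 2 * c * eval μ p := by simp
      rw [IsRoot, this, hc]
      field_simp
      ring
    · apply Dvd.dvd.mul_left
      rw [← pow_mul]
      exact pow_dvd_pow _ (by omega)

lemma sqrt_mod_mul {f g p q : ℝ[X]} (hfg : IsCoprime f g) (hf : f ∣ p^2 - X) (hg : g ∣ q^2 - X) :
    ∃ r : ℝ[X], f * g ∣ r^2 - X := by
  obtain ⟨a, b, hab⟩ := hfg
  set r := q * a * f + p * b * g with hr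
  have hfr : f ∣ r - p := by
    have : r - p = (q - p) * a * f := by
      have hb : p * (b * g) = p * (1 - a * f) := by rw [← hab]; ring
      rw [hr]; linear_combination hb
    exact this ▸ Dvd.dvd.mul_left (dvd_refl f) _
  have hgr : g ∣ r - q := by
    have : r - q = (p - q) * b * g := by
      have ha : q * (a * f) = q * (1 - b * g) := by rw [← hab]; ring
      rw [hr]; linear_combination ha
    exact this ▸ Dvd.dvd.mul_left (dvd_refl g) _
  refine ⟨r, (IsCoprime.mul_dvd ⟨a, b, hab⟩ ?_ ?_)⟩
  · have : r^2 - X = (r - p) * (r + p) + (p^2 - X) := by ring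
    rw [this]; exact dvd_add (hfr.mul_right _) hf
  · have : r^2 - X = (r - q) * (r + q) + (q^2 - X) := by ring
    rw [this]; exact dvd_add (hgr.mul_right _) hg

lemma sqrt_mod_prod (s : Finset ℝ) (hs : ∀ μ ∈ s, 0 < μ) (e : ℕ) :
    ∃ p : ℝ[X], (∏ μ ∈ s, (X - C μ)^(e+1)) ∣ p^2 - X := by
  classical
  induction s using Finset.induction_on with
  | empty => exact ⟨0, by simp⟩
  | @insert a s ha ih =>
    obtain ⟨q, hq⟩ := ih (fun μ hμ => hs μ (Finset.mem_insert_of_mem hμ))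
    obtain ⟨p, hp⟩ := sqrt_mod_pow a (hs a (Finset.mem_insert_self a s)) e
    have hcop : IsCoprime ((X - C a)^(e+1)) (∏ μ ∈ s, (X - C μ)^(e+1)) := by
      apply IsCoprime.prod_right
      intro μ hμ
      exact (isCoprime_X_sub_C_of_isUnit_sub (by
        have : a ≠ μ := fun h => ha (h ▸ hμ)
        exact (sub_ne_zero_of_ne this).isUnit)).pow
    obtain ⟨r, hr⟩ := sqrt_mod_mul hcop hp hq
    exact ⟨r, by rwa [Finset.prod_insert ha]⟩

lemma exists_sqrt {n : ℕ} (μ : Fin n → ℝ) (hμ : ∀ i, 0 < μ i) :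
    ∃ p : ℝ[X], (∏ i, (X - C (μ i))) ∣ p^2 - X := by
  classical
  obtain ⟨p, hp⟩ := sqrt_mod_prod (Finset.image μ Finset.univ)
    (fun t ht => by obtain ⟨i, _, rfl⟩ := Finset.mem_image.mp ht; exact hμ i) n
  refine ⟨p, dvd_trans ?_ hp⟩
  rw [← Finset.prod_fiberwise_of_maps_to
    (fun i _ => Finset.mem_image_of_mem μ (Finset.mem_univ i)) (fun i => X - C (μ i))]
  apply Finset.prod_dvd_prod_of_dvd
  intro t _
  have : ∏ i ∈ Finset.univ.filter (fun i => μ i = t), (X - C (μ i))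
      = (X - C t)^((Finset.univ.filter (fun i => μ i = t)).card) := by
    rw [Finset.prod_congr rfl (fun i hi => by rw [(Finset.mem_filter.mp hi).2]),
      Finset.prod_const]
  rw [this]
  exact pow_dvd_pow _ (le_trans (Finset.card_filter_le _ _) (by simp))

lemma spectral {V : Type*} [AddCommGroup V] [Module ℝ V] [FiniteDimensional ℝ V]
    (η η' : V →ₗ[ℝ] V →ₗ[ℝ] ℝ) (hηsymm : ∀ x y, η x y = η y x)
    (u : V →ₗ[ℝ] V) (hu : ∀ x y, η' x y = η x (u y)) (husa : ∀ x y, η (u x) y = η x (u y))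
    (hηpos : ∀ x : V, x ≠ 0 → 0 < η x x) (hη'pos : ∀ x : V, x ≠ 0 → 0 < η' x x) :
    ∃ (μ : Fin (Module.finrank ℝ V) → ℝ), (∀ i, 0 < μ i) ∧
      LinearMap.charpoly u = ∏ i, (X - C (μ i)) := by
  classical
  letI core : InnerProductSpace.Core ℝ V :=
    { inner := fun x y => η x y
      conj_inner_symm := fun x y => by simpa using hηsymm y x
      re_inner_nonneg := fun x => by
        by_cases h : x = 0
        · simp [h]
        · exact (hηpos x h).le
      add_left := fun x y z => by simp
      smul_left := fun x y r => by simp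
      definite := fun x h => by
        by_contra hx
        exact (hηpos x hx).ne' h }
  letI := core.toNormedAddCommGroup
  letI := InnerProductSpace.ofCore core.toCore
  have hsym : (u : V →ₗ[ℝ] V).IsSymmetric := fun x y => husa x y
  have hnn : Module.finrank ℝ V = Module.finrank ℝ V := rfl
  let b := hsym.eigenvectorBasis hnn
  let μ := hsym.eigenvalues hnn
  have happ : ∀ i, u (b i) = μ i • b i := fun i => hsym.apply_eigenvectorBasis hnn i
  have hμpos : ∀ i, 0 < μ i := by
    intro i
    have hb0 : (b i : V) ≠ 0 := b.toBasis.ne_zero i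
    have h1 : η' (b i) (b i) = μ i * η (b i) (b i) := by
      rw [hu, happ i]
      simp
    have h2 := hη'pos (b i) hb0
    have h3 := hηpos (b i) hb0
    nlinarith [h1, h2, h3]
  refine ⟨μ, hμpos, ?_⟩
  have hmat : LinearMap.toMatrix b.toBasis b.toBasis u = Matrix.diagonal μ := by
    ext i j
    rw [LinearMap.toMatrix_apply, OrthonormalBasis.coe_toBasis, happ j, map_smul]
    rw [← OrthonormalBasis.coe_toBasis, Basis.repr_self]
    rcases eq_or_ne i j with h | h
    · subst h; simp [Matrix.diagonal]
    · simp [Matrix.diagonal, h, Finsupp.single_apply, Ne.symm h]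
  rw [← LinearMap.charpoly_toMatrix u b.toBasis, hmat]
  rw [Matrix.charpoly_of_upperTriangular _ (Matrix.blockTriangular_diagonal μ)]
  simp [Matrix.diagonal]

/-- Congruence invariance of the index sets. -/
lemma index_set_subset {W : Type*} [AddCommGroup W] [Module ℝ W]
    (B B' : W →ₗ[ℝ] W →ₗ[ℝ] ℝ) (e : W ≃ₗ[ℝ] W) (h : ∀ x, B' x x = B (e x) (e x))
    (P : ℝ → Prop) :
    {n : ℕ | ∃ S : Submodule ℝ W, Module.finrank ℝ S = n ∧ ∀ x ∈ S, x ≠ 0 → P (B' x x)} ⊆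
    {n : ℕ | ∃ S : Submodule ℝ W, Module.finrank ℝ S = n ∧ ∀ x ∈ S, x ≠ 0 → P (B x x)} := by
  rintro n ⟨S, hS, hP⟩
  refine ⟨S.map (e : W →ₗ[ℝ] W), by rw [LinearEquiv.finrank_map_eq]; exact hS, ?_⟩
  rintro x hx hx0
  obtain ⟨y, hy, rfl⟩ := Submodule.mem_map.mp hx
  have hy0 : y ≠ 0 := fun h0 => hx0 (by simp [h0])
  have := hP y hy hy0
  rwa [h y] at this

end Stmt19Aux

open Polynomial in
theorem stmt_19 {V : Type*} [AddCommGroup V] [Module ℝ V] [FiniteDimensional ℝ V]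
    {W : Type*} [AddCommGroup W] [Module ℝ W] [FiniteDimensional ℝ W]
    (hdim : Module.finrank ℝ V = Module.finrank ℝ W)
    (η η' : V →ₗ[ℝ] V →ₗ[ℝ] ℝ) (θ θ' : W →ₗ[ℝ] W →ₗ[ℝ] ℝ)
    (hηsymm : ∀ x y, η x y = η y x) (hη'symm : ∀ x y, η' x y = η' y x)
    (hθsymm : ∀ x y, θ x y = θ y x) (hθ'symm : ∀ x y, θ' x y = θ' y x)
    (u : V →ₗ[ℝ] V) (v : W →ₗ[ℝ] W)
    (hu : ∀ x y, η' x y = η x (u y)) (hv : ∀ x y, θ' x y = θ x (v y))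
    (husa : ∀ x y, η (u x) y = η x (u y)) (hvsa : ∀ x y, θ (v x) y = θ x (v y))
    (hcharpoly : LinearMap.charpoly u = LinearMap.charpoly v)
    (hηpos : ∀ x : V, x ≠ 0 → 0 < η x x) (hη'pos : ∀ x : V, x ≠ 0 → 0 < η' x x)
    (hθnd : ∀ x : W, (∀ y : W, θ x y = 0) → x = 0) :
    signature θ = signature θ' := by
  classical
  obtain ⟨μ, hμpos, hcp⟩ := Stmt19Aux.spectral η η' hηsymm u hu husa hηpos hη'pos
  have hcpv : LinearMap.charpoly v = ∏ i, (X - C (μ i)) := hcharpoly ▸ hcp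
  obtain ⟨p, hp⟩ := Stmt19Aux.exists_sqrt μ hμpos
  obtain ⟨q, hq⟩ : LinearMap.charpoly v ∣ p^2 - X := hcpv ▸ hp
  set w : W →ₗ[ℝ] W := Polynomial.aeval v p with hwdef
  have hww : w * w = v := by
    have h0 : Polynomial.aeval v (p^2 - X) = 0 := by
      rw [hq, map_mul, LinearMap.aeval_self_charpoly, zero_mul]
    rw [map_sub, map_pow, Polynomial.aeval_X, sub_eq_zero] at h0
    rw [hwdef, ← sq]
    exact h0
  -- v is injective
  have hdet : LinearMap.det v ≠ 0 := by
    rw [LinearMap.det_eq_sign_charpoly_coeff, hcpv]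
    rw [Polynomial.coeff_zero_eq_eval_zero]
    have : Polynomial.eval 0 (∏ i, (X - C (μ i))) = ∏ i, (-μ i) := by
      rw [Polynomial.eval_prod]; simp
    rw [this]
    apply mul_ne_zero
    · exact pow_ne_zero _ (by norm_num)
    · exact Finset.prod_ne_zero_iff.mpr fun i _ => by have := hμpos i; linarith
  have hvinj : Function.Injective v := by
    intro x y hxy
    exact (LinearMap.equivOfDetNeZero v hdet).injective hxy
  have hwinj : Function.Injective w := by
    intro x y hxy
    apply hvinj
    rw [← hww]
    show w (w x) = w (w y)
    rw [hxy]
  have hwsurj : Function.Surjective w :=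
    (LinearMap.injective_iff_surjective_of_finrank_eq_finrank rfl).mp hwinj
  let e : W ≃ₗ[ℝ] W := LinearEquiv.ofBijective w ⟨hwinj, hwsurj⟩
  have he : ∀ x, e x = w x := fun x => rfl
  -- powers of v are self-adjoint
  have hpow : ∀ (k : ℕ) (x y : W), θ ((v^k) x) y = θ x ((v^k) y) := by
    intro k
    induction k with
    | zero => intro x y; simp
    | succ k ih =>
      intro x y
      have h1 : (v^(k+1)) x = v ((v^k) x) := by rw [pow_succ']; rfl
      have h2 : (v^(k+1)) y = (v^k) (v y) := by rw [pow_succ]; rfl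
      rw [h1, h2, hvsa, ih]
  have hwsa : ∀ x y, θ (w x) y = θ x (w y) := by
    have haev : ∀ (r : ℝ[X]) (x y : W),
        θ ((Polynomial.aeval v r) x) y = θ x ((Polynomial.aeval v r) y) := by
      intro r
      induction r using Polynomial.induction_on' with
      | add f g hf hg =>
        intro x y
        simp only [map_add, LinearMap.add_apply, map_add, LinearMap.add_apply]
        rw [hf, hg]
      | monomial k a =>
        intro x y
        rw [Polynomial.aeval_monomial]
        have hm : ∀ z : W, (algebraMap ℝ (W →ₗ[ℝ] W) a * v^k) z = a • ((v^k) z) := by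
          intro z
          simp [Module.End.mul_apply, Module.algebraMap_end_apply]
        rw [hm, hm, map_smul, LinearMap.smul_apply, map_smul, smul_eq_mul, smul_eq_mul,
          hpow k]
    exact haev p
  have hcong : ∀ x y, θ' x y = θ (w x) (w y) := by
    intro x y
    rw [hv x y, ← hww]
    show θ x (w (w y)) = θ (w x) (w y)
    exact (hwsa x (w y)).symm
  have hset : ∀ P : ℝ → Prop,
      {n : ℕ | ∃ S : Submodule ℝ W, Module.finrank ℝ S = n ∧ ∀ x ∈ S, x ≠ 0 → P (θ x x)} =
      {n : ℕ | ∃ S : Submodule ℝ W, Module.finrank ℝ S = n ∧ ∀ x ∈ S, x ≠ 0 → P (θ' x x)} := by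
    intro P
    apply subset_antisymm
    · apply Stmt19Aux.index_set_subset θ' θ e.symm
      intro x
      rw [hcong (e.symm x) (e.symm x)]
      rw [show w (e.symm x) = x from e.apply_symm_apply x]
    · apply Stmt19Aux.index_set_subset θ θ' e
      intro x
      rw [hcong x x, he x]
  have hpos : posIndex θ = posIndex θ' := by
    rw [posIndex, posIndex, hset (0 < ·)]
  have hneg : negIndex θ = negIndex θ' := by
    rw [negIndex, negIndex, hset (· < 0)]
  rw [signature, signature, hpos, hneg]
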